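/- Let S ⊆ ℤ^r be finite and nonempty, a_s ∈ K[n]\{0} for s ∈ S, f ∈ K[n], and let p_1,…,p_k ∈ S be corner points of S. If y ∈ K(n) is a solution of the PLDE ∑_{s∈S} a_s N^s y = f whose denominator (in lowest terms) is divisible by an aperiodic irreducible polynomial h ∈ K[n], then for each j ∈ {1,…,k} there exists i ∈ ℤ^r such that N^i h divides a_{p_j}; that is, a factor shift equivalent to h occurs in each of the coefficients a_{p_1},…,a_{p_k}. -/

import Mathlib

open MvPolynomial

/-- The substitution homomorphism `n_j ↦ n_j + i_j` on `K[n₁,…,n_r]`. -/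
noncomputable def mShiftHom (K : Type*) [Field K] {r : ℕ} (i : Fin r → ℤ) :
    MvPolynomial (Fin r) K →ₐ[K] MvPolynomial (Fin r) K :=
  aeval (fun j => X j + C (i j : K))

/-- The shift automorphism `N^i` of `K[n₁,…,n_r]`, determined by `n_j ↦ n_j + i_j`. -/
noncomputable def mShift (K : Type*) [Field K] {r : ℕ} (i : Fin r → ℤ) :
    MvPolynomial (Fin r) K ≃ₐ[K] MvPolynomial (Fin r) K :=
  AlgEquiv.ofAlgHom (mShiftHom K i) (mShiftHom K (-i))
    (by apply MvPolynomial.algHom_ext; intro j; simp [mShiftHom])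
    (by apply MvPolynomial.algHom_ext; intro j; simp [mShiftHom])

/-- `Spread(p,q) = { i ∈ ℤ^r : gcd(p, N^i q) ≠ 1 }`, where `gcd ≠ 1` (not a unit)
is expressed as `¬ IsRelPrime`. -/
def mSpread {K : Type*} [Field K] {r : ℕ} (p q : MvPolynomial (Fin r) K) :
    Set (Fin r → ℤ) :=
  {i | ¬ IsRelPrime p (mShift K i q)}

/-- The canonical embedding of `K[n₁,…,n_r]` into its fraction field `K(n₁,…,n_r)`. -/
noncomputable def toFrac (K : Type*) [Field K] {r : ℕ} :
    MvPolynomial (Fin r) K →+* FractionRing (MvPolynomial (Fin r) K) :=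
  algebraMap _ _

/-- The shift automorphism `N^i` extended to the fraction field `K(n₁,…,n_r)`. -/
noncomputable def fShift (K : Type*) [Field K] {r : ℕ} (i : Fin r → ℤ) :
    FractionRing (MvPolynomial (Fin r) K) ≃+* FractionRing (MvPolynomial (Fin r) K) :=
  IsFractionRing.ringEquivOfRingEquiv (mShift K i).toRingEquiv

section Helpers
variable {K : Type*} [Field K] {r : ℕ}

lemma mShift_comp (i j : Fin r → ℤ) (x : MvPolynomial (Fin r) K) :
    mShift K i (mShift K j x) = mShift K (i + j) x := by
  have : ((mShift K i).toAlgHom.comp (mShift K j).toAlgHom) = (mShift K (i+j)).toAlgHom := by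
    apply MvPolynomial.algHom_ext; intro l
    simp [mShift, mShiftHom]
    push_cast
    ring
  exact DFunLike.congr_fun this x

lemma mShift_zero (x : MvPolynomial (Fin r) K) : mShift K (0 : Fin r → ℤ) x = x := by
  have : (mShift K (0 : Fin r → ℤ)).toAlgHom = AlgHom.id K _ := by
    apply MvPolynomial.algHom_ext; intro l
    simp [mShift, mShiftHom]
  exact DFunLike.congr_fun this x

lemma mShift_dvd_iff (i : Fin r → ℤ) {a b : MvPolynomial (Fin r) K} :
    mShift K i a ∣ mShift K i b ↔ a ∣ b := by
  constructor
  · intro hd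
    have := map_dvd (mShift K i).symm hd
    simpa using this
  · exact fun hd => map_dvd _ hd

lemma fShift_toFrac (i : Fin r → ℤ) (g : MvPolynomial (Fin r) K) :
    fShift K i (toFrac K g) = toFrac K (mShift K i g) := by
  simpa [fShift, toFrac] using
    IsLocalization.ringEquivOfRingEquiv_eq (S := FractionRing (MvPolynomial (Fin r) K))
      (Q := FractionRing (MvPolynomial (Fin r) K)) (M := nonZeroDivisors _)
      (j := (mShift K i).toRingEquiv) (by ext; simp) g

lemma toFrac_injective : Function.Injective (toFrac K (r := r)) :=
  IsFractionRing.injective _ _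

lemma mShift_prime (i : Fin r → ℤ) {h : MvPolynomial (Fin r) K} (hirr : Irreducible h) :
    Prime (mShift K i h) := by
  have : Irreducible (mShift K i h) := by
    exact (MulEquiv.irreducible_iff (mShift K i).toMulEquiv).mpr hirr
  exact this.prime

lemma shiftDvd_finite {h den : MvPolynomial (Fin r) K} (hirr : Irreducible h)
    (haper : ({i : Fin r → ℤ | ¬ IsRelPrime h (mShift K i h)}).Finite) (hden0 : den ≠ 0) :
    {i : Fin r → ℤ | mShift K i h ∣ den}.Finite := by
  classical
  set F := (UniqueFactorizationMonoid.factors den).toFinset with hF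
  have hsub : {i : Fin r → ℤ | mShift K i h ∣ den} ⊆
      ⋃ g ∈ (F : Set (MvPolynomial (Fin r) K)), {i | Associated (mShift K i h) g} := by
    intro i hi
    obtain ⟨g, hg, hassoc⟩ :=
      UniqueFactorizationMonoid.exists_mem_factors_of_dvd hden0
        ((mShift_prime i hirr).irreducible) hi
    exact Set.mem_biUnion (Multiset.mem_toFinset.mpr hg) hassoc
  refine Set.Finite.subset (Set.Finite.biUnion F.finite_toSet fun g _ => ?_) hsub
  by_cases hne : ({i : Fin r → ℤ | Associated (mShift K i h) g}).Nonempty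
  · obtain ⟨i0, hi0⟩ := hne
    refine Set.Finite.subset (haper.image (fun d => i0 + d)) ?_
    intro i hi
    have hassoc : Associated (mShift K i h) (mShift K i0 h) := hi.trans hi0.symm
    have hassoc2 : Associated (mShift K (-i0 + i) h) h := by
      have := hassoc.map (mShift K (-i0)).toAlgHom.toRingHom.toMonoidHom
      simpa [mShift_comp, mShift_zero, neg_add_cancel] using this
    have hmem : (-i0 + i) ∈ {i : Fin r → ℤ | ¬ IsRelPrime h (mShift K i h)} := by
      intro hrel
      exact hirr.not_isUnit (hrel (dvd_refl h) hassoc2.symm.dvd)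
    exact ⟨-i0 + i, hmem, by simp⟩
  · rw [Set.not_nonempty_iff_eq_empty] at hne
    simp [hne]

end Helpers

/-- **Theorem (factors at corner points).**
Let `p₁,…,p_k ∈ S` be corner points of `S`.  If `y ∈ K(n)` is a solution of the PLDE
`∑_{t ∈ S} a_t N^t y = f` whose denominator (in lowest terms) is divisible by an
aperiodic irreducible polynomial `h`, then for each `j` some shift `N^i h` of `h`
divides `a_{p_j}`: a factor shift equivalent to `h` occurs in each of the coefficients
`a_{p₁},…,a_{p_k}`. -/
theorem shift_equivalent_factor_at_corner_points
    {K : Type*} [Field K] [CharZero K] {r k : ℕ}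
    (S : Finset (Fin r → ℤ)) (hS : S.Nonempty)
    (a : (Fin r → ℤ) → MvPolynomial (Fin r) K) (ha : ∀ t ∈ S, a t ≠ 0)
    (f : MvPolynomial (Fin r) K)
    (P : Fin k → (Fin r → ℤ)) (hP : ∀ j, P j ∈ S)
    (hcorner : ∀ j, ∃ v : Fin r → ℝ, v ≠ 0 ∧
      ∀ t ∈ S, t ≠ P j → 0 < ∑ l, v l * ((t l - P j l : ℤ) : ℝ))
    (y : FractionRing (MvPolynomial (Fin r) K))
    (hsol : ∑ t ∈ S, toFrac K (a t) * fShift K t y = toFrac K f)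
    (pnum den : MvPolynomial (Fin r) K)
    (hden0 : den ≠ 0)
    (hy : y = toFrac K pnum / toFrac K den)
    (hlow : IsRelPrime pnum den)
    (h : MvPolynomial (Fin r) K)
    (hirr : Irreducible h) (haper : (mSpread h h).Finite) (hdvd : h ∣ den) :
    ∀ j, ∃ i : Fin r → ℤ, mShift K i h ∣ a (P j) := by
  classical
  -- the polynomial identity obtained by clearing denominators
  set D := ∏ s ∈ S, mShift K s den with hDdef
  have hfden : ∀ t : Fin r → ℤ, toFrac K (mShift K t den) ≠ 0 := by
    intro t
    have h1 : mShift K t den ≠ 0 := fun hh => hden0 (by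
      have := congrArg (mShift K t).symm hh; simpa using this)
    exact fun hh => h1 (toFrac_injective (by simpa using hh))
  have key : ∀ t ∈ S, toFrac K (a t) * fShift K t y * toFrac K D
      = toFrac K (a t * mShift K t pnum * ∏ s ∈ S.erase t, mShift K s den) := by
    intro t ht
    have hDt : D = mShift K t den * ∏ s ∈ S.erase t, mShift K s den :=
      (Finset.mul_prod_erase S _ ht).symm
    rw [hy, map_div₀, fShift_toFrac, fShift_toFrac, hDt, map_mul, map_mul, map_mul]
    field_simp
    rw [div_eq_iff (hfden t)]; ring
  have E : ∑ t ∈ S, a t * mShift K t pnum * ∏ s ∈ S.erase t, mShift K s den = f * D := by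
    apply toFrac_injective
    calc toFrac K (∑ t ∈ S, a t * mShift K t pnum * ∏ s ∈ S.erase t, mShift K s den)
        = ∑ t ∈ S, toFrac K (a t * mShift K t pnum * ∏ s ∈ S.erase t, mShift K s den) :=
          map_sum _ _ _
      _ = ∑ t ∈ S, toFrac K (a t) * fShift K t y * toFrac K D :=
          Finset.sum_congr rfl fun t ht => (key t ht).symm
      _ = (∑ t ∈ S, toFrac K (a t) * fShift K t y) * toFrac K D := by rw [Finset.sum_mul]
      _ = toFrac K f * toFrac K D := by rw [hsol]
      _ = toFrac K (f * D) := (map_mul _ _ _).symm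
  intro j
  obtain ⟨v, hv0, hvc⟩ := hcorner j
  set p := P j with hpdef
  -- the finite set of shifts of h dividing den
  have hTfin : {i : Fin r → ℤ | mShift K i h ∣ den}.Finite := shiftDvd_finite hirr haper hden0
  have hT0 : (0 : Fin r → ℤ) ∈ {i : Fin r → ℤ | mShift K i h ∣ den} := by
    simpa [mShift_zero] using hdvd
  obtain ⟨i0, hi0T, hi0min⟩ := Set.exists_min_image _ (fun i => ∑ l, v l * (i l : ℝ))
    hTfin ⟨0, hT0⟩
  set q := mShift K (p + i0) h with hqdef
  have hq : Prime q := mShift_prime _ hirr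
  -- claim A: q divides `mShift t den` only for t = p
  have claimA : ∀ t ∈ S, q ∣ mShift K t den → t = p := by
    intro t ht hdvd'
    by_contra htne
    have h1 : mShift K (-t + (p + i0)) h ∣ den := by
      have := map_dvd (mShift K (-t)) hdvd'
      rw [hqdef] at this
      rw [mShift_comp, mShift_comp] at this
      simpa [mShift_zero] using this
    have h2 := hi0min _ h1
    have h3 : ∑ l, v l * ((t l - p l : ℤ) : ℝ) ≤ 0 := by
      have h4 : ∑ l, v l * ((t l - p l : ℤ) : ℝ)
          = (∑ l, v l * ((i0 l : ℤ) : ℝ)) - ∑ l, v l * (((-t + (p + i0)) l : ℤ) : ℝ) := by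
        rw [← Finset.sum_sub_distrib]
        refine Finset.sum_congr rfl fun l _ => ?_
        simp only [Pi.add_apply, Pi.neg_apply]
        push_cast
        ring
      rw [h4]
      linarith [h2]
    exact absurd h3 (not_le.mpr (hvc t ht htne))
  have hqPden : q ∣ mShift K p den := by
    rw [hqdef, ← mShift_comp]
    exact map_dvd _ hi0T
  have hqD : q ∣ D := hqPden.trans (Finset.dvd_prod_of_mem _ (hP j))
  have hqmain : q ∣ a p * mShift K p pnum * ∏ s ∈ S.erase p, mShift K s den := by
    have h1 : q ∣ ∑ t ∈ S, a t * mShift K t pnum * ∏ s ∈ S.erase t, mShift K s den := by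
      rw [E]; exact hqD.mul_left f
    have h2 : q ∣ ∑ t ∈ S.erase p, a t * mShift K t pnum * ∏ s ∈ S.erase t, mShift K s den := by
      refine Finset.dvd_sum fun t ht => ?_
      have htS := Finset.mem_of_mem_erase ht
      have htne := Finset.ne_of_mem_erase ht
      have : q ∣ ∏ s ∈ S.erase t, mShift K s den :=
        hqPden.trans (Finset.dvd_prod_of_mem _ (Finset.mem_erase.mpr ⟨Ne.symm htne, hP j⟩))
      exact this.mul_left _
    have h5 := Finset.add_sum_erase S
      (fun t => a t * mShift K t pnum * ∏ s ∈ S.erase t, mShift K s den) (hP j)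
    have h6 := dvd_sub h1 h2
    rw [← h5, add_sub_cancel_right] at h6
    exact h6
  rcases hq.2.2 _ _ hqmain with hc | hc
  · rcases hq.2.2 _ _ hc with hc2 | hc2
    · exact ⟨p + i0, hc2⟩
    · exfalso
      have hd1 : mShift K i0 h ∣ pnum := by
        have := map_dvd (mShift K (-p)) hc2
        rw [hqdef, mShift_comp, mShift_comp] at this
        simpa [mShift_zero, neg_add_cancel_left] using this
      exact (mShift_prime i0 hirr).not_unit (hlow hd1 hi0T)
  · exfalso
    obtain ⟨s, hs, hsd⟩ := hq.exists_mem_finset_dvd hc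
    exact Finset.ne_of_mem_erase hs (claimA s (Finset.mem_of_mem_erase hs) hsd)
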